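/- Let k be a field of characteristic 0 and define d̄ : k[X,Y] → k[x,y,z] by d̄(f) = −f(y,z) + (x f(x,z) − y f(y,z))/(x−y) − (y f(x,y) − z f(x,z))/(y−z) + x y f(x−z, y−z)/((x−z)(y−z)) for f in the ideal (XY) of k[X,Y]. Then the kernel of d̄ restricted to (XY) is the linear span of the polynomials X((X^n − Y^n − (X−Y)^n)/(X−Y)) for n ≥ 2. -/

import Mathlib

open MvPolynomial

section Aux

variable {k : Type*} [Field k] [CharZero k]

/-- Chain rule for `aeval` at a pair. -/
lemma pderiv_aeval_pair {τ : Type*} [DecidableEq τ] (i : τ) (g0 g1 : MvPolynomial τ k)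
    (p : MvPolynomial (Fin 2) k) :
    pderiv i (aeval ![g0, g1] p) =
      aeval ![g0, g1] (pderiv 0 p) * pderiv i g0 + aeval ![g0, g1] (pderiv 1 p) * pderiv i g1 := by
  induction p using MvPolynomial.induction_on with
  | C a => simp [pderiv_C]
  | add p q hp hq => simp only [map_add, hp, hq]; ring
  | mul_X p j hp =>
    fin_cases j
    · show pderiv i (aeval ![g0, g1] (p * X 0)) =
        aeval ![g0, g1] (pderiv 0 (p * X 0)) * pderiv i g0 +
          aeval ![g0, g1] (pderiv 1 (p * X 0)) * pderiv i g1
      simp only [map_mul, aeval_X, Matrix.cons_val_zero, Matrix.cons_val_one, Matrix.head_cons,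
        pderiv_mul, hp, pderiv_X_self, pderiv_X_of_ne (show (0:Fin 2) ≠ 1 by decide),
        map_add, mul_one, mul_zero, add_zero, zero_add]
      ring
    · show pderiv i (aeval ![g0, g1] (p * X 1)) =
        aeval ![g0, g1] (pderiv 0 (p * X 1)) * pderiv i g0 +
          aeval ![g0, g1] (pderiv 1 (p * X 1)) * pderiv i g1
      simp only [map_mul, aeval_X, Matrix.cons_val_zero, Matrix.cons_val_one, Matrix.head_cons,
        pderiv_mul, hp, pderiv_X_self, pderiv_X_of_ne (show (1:Fin 2) ≠ 0 by decide),
        map_add, mul_one, mul_zero, add_zero, zero_add]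
      ring

omit [CharZero k] in
lemma aeval_pair_comp {B A : Type*} [CommRing B] [Algebra k B] [CommRing A] [Algebra k A]
    (φ : B →ₐ[k] A) (a b : B) (p : MvPolynomial (Fin 2) k) :
    φ (aeval ![a, b] p) = aeval ![φ a, φ b] p := by
  rw [comp_aeval_apply]
  have : (fun i => φ (![a, b] i)) = ![φ a, φ b] := by
    funext i; fin_cases i <;> simp
  rw [this]

omit [CharZero k] in
lemma aeval_pair_X (p : MvPolynomial (Fin 2) k) : aeval ![X 0, X 1] p = p := by
  have : (![X 0, X 1] : Fin 2 → MvPolynomial (Fin 2) k) = X := by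
    funext i; fin_cases i <;> rfl
  rw [this, aeval_X_left_apply]

lemma coeff_pderiv' {σ : Type*} [DecidableEq σ] (i : σ) (m : σ →₀ ℕ) (p : MvPolynomial σ k) :
    coeff m (pderiv i p) = ((m i : k) + 1) * coeff (m + Finsupp.single i 1) p := by
  induction p using MvPolynomial.induction_on' with
  | monomial s a =>
    rw [pderiv_monomial, coeff_monomial, coeff_monomial]
    by_cases hs : s = m + Finsupp.single i 1
    · have h1 : s - Finsupp.single i 1 = m := by rw [hs]; simp
      have h2 : s i = m i + 1 := by rw [hs]; simp
      rw [if_pos h1, if_pos hs, h2]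
      push_cast
      ring
    · rw [if_neg hs]
      by_cases h1 : s - Finsupp.single i 1 = m
      · rw [if_pos h1]
        by_cases h2 : s i = 0
        · simp [h2]
        · exfalso
          apply hs
          rw [← h1, tsub_add_cancel_of_le]
          rw [Finsupp.single_le_iff]
          omega
      · rw [if_neg h1, mul_zero]
  | add p q hp hq =>
    rw [map_add, coeff_add, coeff_add, hp, hq]
    ring

lemma T_injective (h : MvPolynomial (Fin 2) k)
    (hT : h + X 1 * (pderiv 0 h + pderiv 1 h) = 0) : h = 0 := by
  have hd : pderiv 1 (aeval ![(X 0 + X 1 : MvPolynomial (Fin 2) k), X 1] h) =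
      aeval ![(X 0 + X 1 : MvPolynomial (Fin 2) k), X 1] (pderiv 0 h)
        + aeval ![(X 0 + X 1 : MvPolynomial (Fin 2) k), X 1] (pderiv 1 h) := by
    rw [pderiv_aeval_pair]
    rw [map_add, pderiv_X_self, pderiv_X_of_ne (show (0:Fin 2) ≠ 1 by decide)]
    ring
  set w : MvPolynomial (Fin 2) k := aeval ![(X 0 + X 1 : MvPolynomial (Fin 2) k), X 1] h with hw
  have hwz : w + X 1 * pderiv 1 w = 0 := by
    have h0 : aeval ![(X 0 + X 1 : MvPolynomial (Fin 2) k), X 1]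
        (h + X 1 * (pderiv 0 h + pderiv 1 h)) = 0 := by
      rw [hT]; exact map_zero _
    rw [map_add, map_mul, map_add, aeval_X] at h0
    simp only [Matrix.cons_val_one, Matrix.head_cons, Matrix.cons_val_zero] at h0
    rw [hd]
    linear_combination h0
  have hwc : w = 0 := by
    ext m
    have hc := congrArg (coeff m) hwz
    rw [coeff_add, coeff_zero, coeff_X_mul' m 1 (pderiv 1 w)] at hc
    rw [coeff_zero]
    by_cases hm : (1 : Fin 2) ∈ m.support
    · rw [if_pos hm, coeff_pderiv'] at hc
      have hm1 : m 1 ≠ 0 := Finsupp.mem_support_iff.mp hm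
      have hms : m - Finsupp.single 1 1 + Finsupp.single 1 1 = m := by
        rw [tsub_add_cancel_of_le]
        rw [Finsupp.single_le_iff]; omega
      rw [hms] at hc
      have hmi : ((m - Finsupp.single 1 1 : Fin 2 →₀ ℕ) 1 : ℕ) = m 1 - 1 := by
        rw [Finsupp.tsub_apply]; simp
      rw [hmi] at hc
      have hcast : ((m 1 - 1 : ℕ) : k) + 1 = (m 1 : k) := by
        rw [Nat.cast_sub (by omega)]; push_cast; ring
      rw [hcast] at hc
      have hkey : (1 + (m 1 : k)) * coeff m w = 0 := by linear_combination hc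
      have hne : (1 + (m 1 : k)) ≠ 0 := by
        have h2 := Nat.cast_add_one_ne_zero (R := k) (m 1)
        intro hcon; apply h2; linear_combination hcon
      exact (mul_eq_zero.mp hkey).resolve_left hne
    · rw [if_neg hm, add_zero] at hc
      exact hc
  have hinv : aeval ![(X 0 - X 1 : MvPolynomial (Fin 2) k), X 1] w = h := by
    rw [hw, aeval_pair_comp (aeval ![(X 0 - X 1 : MvPolynomial (Fin 2) k), X 1])]
    rw [map_add, aeval_X, aeval_X]
    simp only [Matrix.cons_val_zero, Matrix.cons_val_one, Matrix.head_cons]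
    rw [sub_add_cancel, aeval_pair_X]
  rw [← hinv, hwc, map_zero]

omit [CharZero k] in
lemma X1_dvd_of_slice_zero (p : MvPolynomial (Fin 2) k)
    (hp : aeval ![X 0, (0 : MvPolynomial (Fin 2) k)] p = 0) : X 1 ∣ p := by
  have key : ∀ p : MvPolynomial (Fin 2) k,
      X 1 ∣ (p - aeval ![X 0, (0 : MvPolynomial (Fin 2) k)] p) := by
    intro p
    induction p using MvPolynomial.induction_on with
    | C a => simp
    | add p q hp hq =>
      rw [map_add]
      have e : p + q - (aeval ![X 0, (0 : MvPolynomial (Fin 2) k)] p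
          + aeval ![X 0, (0 : MvPolynomial (Fin 2) k)] q)
          = (p - aeval ![X 0, (0 : MvPolynomial (Fin 2) k)] p)
            + (q - aeval ![X 0, (0 : MvPolynomial (Fin 2) k)] q) := by ring
      rw [e]
      exact dvd_add hp hq
    | mul_X p j hp =>
      fin_cases j
      · show X 1 ∣ p * X 0 - aeval ![X 0, (0 : MvPolynomial (Fin 2) k)] (p * X 0)
        rw [map_mul, aeval_X]
        simp only [Matrix.cons_val_zero]
        have e : p * X 0 - aeval ![X 0, (0 : MvPolynomial (Fin 2) k)] p * X 0
            = (p - aeval ![X 0, (0 : MvPolynomial (Fin 2) k)] p) * X 0 := by ring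
        rw [e]
        exact Dvd.dvd.mul_right hp _
      · show X 1 ∣ p * X 1 - aeval ![X 0, (0 : MvPolynomial (Fin 2) k)] (p * X 1)
        rw [map_mul, aeval_X]
        simp only [Matrix.cons_val_one, Matrix.head_cons, Matrix.cons_val_zero, mul_zero, sub_zero]
        exact dvd_mul_left (X 1) p
  have h2 := key p
  rw [hp, sub_zero] at h2
  exact h2

/-- The kernel equation from the theorem statement. -/
def KerEq (f h : MvPolynomial (Fin 2) k) : Prop :=
  (X 1 - X 2) * (X 0 * aeval ![(X 0 : MvPolynomial (Fin 3) k), X 2] f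
      - X 1 * aeval ![(X 1 : MvPolynomial (Fin 3) k), X 2] f)
    - (X 0 - X 1) * (X 1 * aeval ![(X 0 : MvPolynomial (Fin 3) k), X 1] f
      - X 2 * aeval ![(X 0 : MvPolynomial (Fin 3) k), X 2] f)
    + (X 0 - X 1) * (X 1 - X 2) * (X 0 * X 1 *
        aeval ![(X 0 - X 2 : MvPolynomial (Fin 3) k), X 1 - X 2] h
      - aeval ![(X 1 : MvPolynomial (Fin 3) k), X 2] f) = 0

/-- The derived "star" equation. -/
def StarEq (h : MvPolynomial (Fin 2) k) : Prop :=
  X 0 * (X 0 * aeval ![(X 0 : MvPolynomial (Fin 2) k), 0] h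
      - X 1 * aeval ![(X 1 : MvPolynomial (Fin 2) k), 0] h)
    = (X 0 - X 1) * X 0 * (h + X 1 * (pderiv 0 h + pderiv 1 h))

lemma X_sub_X_ne_zero {σ : Type*} [DecidableEq σ] {i j : σ} (hij : i ≠ j) :
    (X i - X j : MvPolynomial σ k) ≠ 0 :=
  sub_ne_zero.mpr fun hc => hij (X_injective hc)

lemma gen_kerEq {n : ℕ} (q h : MvPolynomial (Fin 2) k)
    (hq : (X 0 - X 1) * q = X 0 ^ n - X 1 ^ n - (X 0 - X 1) ^ n)
    (hh : q = X 1 * h) : KerEq (X 0 * q) h := by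
  unfold KerEq
  have hM : (((X 0 - X 1) * ((X 1 - X 2) * (X 0 - X 2))) : MvPolynomial (Fin 3) k) ≠ 0 :=
    mul_ne_zero (X_sub_X_ne_zero (by decide))
      (mul_ne_zero (X_sub_X_ne_zero (by decide)) (X_sub_X_ne_zero (by decide)))
  have R1 := congrArg (aeval ![(X 0 : MvPolynomial (Fin 3) k), X 2]) hq
  have R2 := congrArg (aeval ![(X 1 : MvPolynomial (Fin 3) k), X 2]) hq
  have R3 := congrArg (aeval ![(X 0 : MvPolynomial (Fin 3) k), X 1]) hq
  have R4 := congrArg (aeval ![(X 0 - X 2 : MvPolynomial (Fin 3) k), X 1 - X 2]) hq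
  have S4 := congrArg (aeval ![(X 0 - X 2 : MvPolynomial (Fin 3) k), X 1 - X 2]) hh
  simp only [map_mul, map_sub, map_pow, aeval_X, Matrix.cons_val_zero, Matrix.cons_val_one,
    Matrix.head_cons] at R1 R2 R3 R4 S4
  rw [← sub_eq_zero, sub_zero]
  have key : ((X 1 - X 2) * (X 0 * aeval ![(X 0 : MvPolynomial (Fin 3) k), X 2] (X 0 * q)
      - X 1 * aeval ![(X 1 : MvPolynomial (Fin 3) k), X 2] (X 0 * q))
    - (X 0 - X 1) * (X 1 * aeval ![(X 0 : MvPolynomial (Fin 3) k), X 1] (X 0 * q)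
      - X 2 * aeval ![(X 0 : MvPolynomial (Fin 3) k), X 2] (X 0 * q))
    + (X 0 - X 1) * (X 1 - X 2) * (X 0 * X 1 *
        aeval ![(X 0 - X 2 : MvPolynomial (Fin 3) k), X 1 - X 2] h
      - aeval ![(X 1 : MvPolynomial (Fin 3) k), X 2] (X 0 * q)))
      * ((X 0 - X 1) * ((X 1 - X 2) * (X 0 - X 2))) = 0 := by
    simp only [map_mul, aeval_X, Matrix.cons_val_zero, Matrix.cons_val_one, Matrix.head_cons]
    linear_combination
      ((X 0 - X 1) * (X 1 - X 2) * (X 0 - X 2) * X 0 * X 1 : MvPolynomial (Fin 3) k) * R1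
      - ((X 0 - X 1) * (X 1 - X 2) * (X 0 - X 2) * X 0 * X 1 : MvPolynomial (Fin 3) k) * R2
      - ((X 0 - X 1) * (X 1 - X 2) * (X 0 - X 2) * X 0 * X 1 : MvPolynomial (Fin 3) k) * R3
      + ((X 0 - X 1) * (X 1 - X 2) * (X 0 - X 2) * X 0 * X 1 : MvPolynomial (Fin 3) k) * R4
      - ((X 0 - X 1) * (X 0 - X 1) * (X 1 - X 2) * (X 0 - X 2) * X 0 * X 1
          : MvPolynomial (Fin 3) k) * S4
  exact (mul_eq_zero.mp key).resolve_right hM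

lemma kerEq_star (h : MvPolynomial (Fin 2) k) (hE : KerEq (X 0 * X 1 * h) h) : StarEq h := by
  unfold KerEq at hE
  simp only [map_mul, aeval_X, Matrix.cons_val_zero, Matrix.cons_val_one,
    Matrix.head_cons] at hE
  have hD := congrArg (pderiv (2 : Fin 3)) hE
  simp only [map_sub, map_add, pderiv_mul, pderiv_aeval_pair,
    pderiv_X_self, pderiv_X_of_ne (show (0 : Fin 3) ≠ 2 by decide),
    pderiv_X_of_ne (show (1 : Fin 3) ≠ 2 by decide), map_zero, mul_zero, zero_mul, add_zero,
    zero_add, sub_zero, zero_sub, mul_one, mul_neg, neg_neg] at hD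
  have hP := congrArg (aeval ![(X 0 : MvPolynomial (Fin 2) k), X 1, 0]) hD
  simp only [map_sub, map_add, map_mul, map_neg, map_zero,
    aeval_pair_comp (aeval ![(X 0 : MvPolynomial (Fin 2) k), X 1, 0]), aeval_X,
    Matrix.cons_val_zero, Matrix.cons_val_one, Matrix.head_cons, Matrix.cons_val_two,
    Matrix.tail_cons, sub_zero, aeval_pair_X, mul_zero, zero_mul, add_zero, zero_add,
    mul_one, neg_zero, mul_neg, neg_neg] at hP
  have hx : (X 1 : MvPolynomial (Fin 2) k) *
      (X 0 ^ 2 * aeval ![(X 0 : MvPolynomial (Fin 2) k), 0] h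
        - X 0 * X 1 * aeval ![(X 1 : MvPolynomial (Fin 2) k), 0] h
        - (X 0 - X 1) * X 0 * h
        - (X 0 - X 1) * X 0 * X 1 * (pderiv 0 h + pderiv 1 h))
      = X 1 * 0 := by
    rw [mul_zero]
    linear_combination hP
  have hDD := mul_left_cancel₀ (X_ne_zero (R := k) (1 : Fin 2)) hx
  unfold StarEq
  linear_combination hDD

lemma starEq_add {h1 h2 : MvPolynomial (Fin 2) k} (s1 : StarEq h1) (s2 : StarEq h2) :
    StarEq (h1 + h2) := by
  unfold StarEq at *
  simp only [map_add]
  linear_combination s1 + s2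

lemma starEq_zero : StarEq (0 : MvPolynomial (Fin 2) k) := by
  unfold StarEq; simp

lemma starEq_sub {h1 h2 : MvPolynomial (Fin 2) k} (s1 : StarEq h1) (s2 : StarEq h2) :
    StarEq (h1 - h2) := by
  unfold StarEq at *
  simp only [map_sub]
  linear_combination s1 - s2

lemma starEq_smul (c : k) {h : MvPolynomial (Fin 2) k} (s : StarEq h) : StarEq (c • h) := by
  unfold StarEq at *
  simp only [smul_eq_C_mul, map_mul, aeval_C, algebraMap_eq, pderiv_C_mul]
  linear_combination (C c : MvPolynomial (Fin 2) k) * s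

lemma starEq_inj (h : MvPolynomial (Fin 2) k) (hs : StarEq h)
    (h0 : aeval ![(X 0 : MvPolynomial (Fin 2) k), 0] h = 0) : h = 0 := by
  have h1 : aeval ![(X 1 : MvPolynomial (Fin 2) k), 0] h = 0 := by
    have h2 := congrArg (aeval ![(X 1 : MvPolynomial (Fin 2) k), X 0]) h0
    rw [aeval_pair_comp] at h2
    simp only [aeval_X, map_zero, Matrix.cons_val_zero] at h2
    exact h2
  unfold StarEq at hs
  rw [h0, h1] at hs
  have hT : h + X 1 * (pderiv 0 h + pderiv 1 h) = 0 := by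
    have h2 : (((X 0 - X 1) * X 0 : MvPolynomial (Fin 2) k))
        * (h + X 1 * (pderiv 0 h + pderiv 1 h)) = 0 := by linear_combination -hs
    exact (mul_eq_zero.mp h2).resolve_left
      (mul_ne_zero (X_sub_X_ne_zero (by decide)) (X_ne_zero _))
  exact T_injective h hT

/-- The generator polynomial `q_n`. -/
noncomputable def qgen (n : ℕ) : MvPolynomial (Fin 2) k :=
  (∑ i ∈ Finset.range n, X 0 ^ i * X 1 ^ (n - 1 - i)) - (X 0 - X 1) ^ (n - 1)

lemma qgen_rel {n : ℕ} (hn : 2 ≤ n) :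
    (X 0 - X 1) * qgen (k := k) n = X 0 ^ n - X 1 ^ n - (X 0 - X 1) ^ n := by
  unfold qgen
  have h1 : ((X 0 - X 1 : MvPolynomial (Fin 2) k)) * (X 0 - X 1) ^ (n - 1)
      = (X 0 - X 1) ^ n := by
    rw [← pow_succ']
    congr 1
    omega
  rw [mul_sub, h1, mul_comm ((X 0 : MvPolynomial (Fin 2) k) - X 1) _, geom_sum₂_mul]

lemma qgen_slice {n : ℕ} (hn : 2 ≤ n) :
    aeval ![X 0, (0 : MvPolynomial (Fin 2) k)] (qgen (k := k) n) = 0 := by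
  unfold qgen
  rw [map_sub, map_sum]
  simp only [map_mul, map_pow, map_sub, aeval_X, Matrix.cons_val_zero, Matrix.cons_val_one,
    Matrix.head_cons, sub_zero]
  rw [Finset.sum_eq_single (n - 1)]
  · rw [Nat.sub_self, pow_zero, mul_one, sub_self]
  · intro i hi hne
    rw [Finset.mem_range] at hi
    rw [zero_pow (by omega), mul_zero]
  · intro hmem
    exfalso
    exact hmem (Finset.mem_range.mpr (by omega))

open Classical in
noncomputable def hgen (n : ℕ) : MvPolynomial (Fin 2) k :=
  if hd : (X 1 : MvPolynomial (Fin 2) k) ∣ qgen n then hd.choose else 0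

lemma hgen_spec {n : ℕ} (hn : 2 ≤ n) : qgen (k := k) n = X 1 * hgen n := by
  have hd : (X 1 : MvPolynomial (Fin 2) k) ∣ qgen n :=
    X1_dvd_of_slice_zero _ (qgen_slice hn)
  rw [hgen, dif_pos hd]
  exact hd.choose_spec

/-- The slice homomorphism, evaluating at `(X, 0)`. -/
noncomputable def sliceP : MvPolynomial (Fin 2) k →ₐ[k] Polynomial k :=
  MvPolynomial.aeval (R := k) ![(Polynomial.X : Polynomial k), 0]

lemma slice_emb (p : MvPolynomial (Fin 2) k) :
    aeval ![(X 0 : MvPolynomial (Fin 2) k), 0] p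
      = Polynomial.aeval (R := k) (X 0 : MvPolynomial (Fin 2) k) (sliceP p) := by
  rw [sliceP, aeval_pair_comp (Polynomial.aeval (R := k) (X 0 : MvPolynomial (Fin 2) k))]
  simp

lemma slice_hgen (m : ℕ) :
    sliceP (hgen (k := k) (m + 2)) = Polynomial.C ((m + 2 : ℕ) : k) * Polynomial.X ^ m := by
  have hid : ((X 0 - X 1 : MvPolynomial (Fin 2) k)) * (X 1 * hgen (m + 2))
      = X 0 ^ (m + 2) - X 1 ^ (m + 2) - (X 0 - X 1) ^ (m + 2) := by
    rw [← hgen_spec (by omega)]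
    exact qgen_rel (by omega)
  have hd := congrArg (pderiv (1 : Fin 2)) hid
  simp only [pderiv_mul, map_sub, pderiv_pow, pderiv_X_self,
    pderiv_X_of_ne (show (0 : Fin 2) ≠ 1 by decide), map_zero, mul_zero, zero_mul, zero_sub,
    mul_one, mul_neg, add_zero, zero_add, neg_neg] at hd
  have hs := congrArg (sliceP (k := k)) hd
  simp only [show m + 2 - 1 = m + 1 from by omega, map_sub, map_add, map_mul, map_one, map_neg,
    map_pow, map_natCast, sliceP, aeval_X,
    Matrix.cons_val_zero, Matrix.cons_val_one, Matrix.head_cons, sub_zero, mul_zero, zero_mul,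
    add_zero, zero_add, neg_zero, mul_neg, neg_neg, one_mul, mul_one,
    zero_pow (show m + 1 ≠ 0 by omega)] at hs
  have hkey : Polynomial.X * MvPolynomial.aeval (R := k) ![Polynomial.X, (0 : Polynomial k)] (hgen (m + 2))
      = Polynomial.X * (Polynomial.C ((m + 2 : ℕ) : k) * Polynomial.X ^ m) := by
    rw [Polynomial.C_eq_natCast]
    linear_combination hs
  exact mul_left_cancel₀ Polynomial.X_ne_zero hkey

lemma starEq_hgen (m : ℕ) : StarEq (hgen (k := k) (m + 2)) := by
  apply kerEq_star
  have h1 := gen_kerEq (qgen (k := k) (m + 2)) (hgen (k := k) (m + 2)) (qgen_rel (by omega))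
    (hgen_spec (by omega))
  rwa [hgen_spec (show 2 ≤ m + 2 by omega), ← mul_assoc] at h1

/-- The kernel as a submodule. -/
noncomputable def Kker : Submodule k (MvPolynomial (Fin 2) k) where
  carrier := {f | ∃ h : MvPolynomial (Fin 2) k, f = X 0 * X 1 * h ∧ KerEq f h}
  add_mem' := by
    rintro a b ⟨h1, rfl, e1⟩ ⟨h2, rfl, e2⟩
    refine ⟨h1 + h2, by ring, ?_⟩
    unfold KerEq at *
    simp only [map_add, map_mul, map_sub, aeval_X, Matrix.cons_val_zero, Matrix.cons_val_one,
      Matrix.head_cons] at e1 e2 ⊢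
    linear_combination e1 + e2
  zero_mem' := by
    refine ⟨0, by ring, ?_⟩
    unfold KerEq
    simp
  smul_mem' := by
    rintro c a ⟨h, rfl, e⟩
    refine ⟨c • h, by rw [smul_eq_C_mul, smul_eq_C_mul]; ring, ?_⟩
    unfold KerEq at *
    simp only [smul_eq_C_mul, map_mul, map_sub, aeval_X, aeval_C, algebraMap_eq,
      Matrix.cons_val_zero, Matrix.cons_val_one, Matrix.head_cons] at e ⊢
    linear_combination (C c : MvPolynomial (Fin 3) k) * e

end Aux

theorem stmt10 (k : Type*) [Field k] [CharZero k] :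
    {f : MvPolynomial (Fin 2) k | ∃ h : MvPolynomial (Fin 2) k,
      f = X 0 * X 1 * h ∧
      (let x : MvPolynomial (Fin 3) k := X 0
       let y : MvPolynomial (Fin 3) k := X 1
       let z : MvPolynomial (Fin 3) k := X 2
       let F : MvPolynomial (Fin 3) k → MvPolynomial (Fin 3) k → MvPolynomial (Fin 3) k :=
         fun a b => aeval ![a, b] f
       let H : MvPolynomial (Fin 3) k → MvPolynomial (Fin 3) k → MvPolynomial (Fin 3) k :=
         fun a b => aeval ![a, b] h
       (y - z) * (x * F x z - y * F y z) - (x - y) * (y * F x y - z * F x z)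
         + (x - y) * (y - z) * (x * y * H (x - z) (y - z) - F y z) = 0)}
    = ↑(Submodule.span k {p : MvPolynomial (Fin 2) k | ∃ n : ℕ, 2 ≤ n ∧
        ∃ q : MvPolynomial (Fin 2) k,
          (X 0 - X 1) * q = X 0 ^ n - X 1 ^ n - (X 0 - X 1) ^ n ∧ p = X 0 * q}) := by
  apply Set.Subset.antisymm
  · -- kernel ⊆ span
    rintro f ⟨h, rfl, hElet⟩
    have hE : KerEq (X 0 * X 1 * h) h := hElet
    have hstar : StarEq h := kerEq_star h hE
    set u : Polynomial k := sliceP h with hu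
    set h' : MvPolynomial (Fin 2) k :=
      ∑ m ∈ Finset.range (u.natDegree + 1), (u.coeff m / ((m : k) + 2)) • hgen (m + 2) with hh'
    have hstar' : StarEq h' := by
      rw [hh']
      refine Finset.sum_induction _ StarEq (fun a b ha hb => starEq_add ha hb) starEq_zero ?_
      intro m _
      exact starEq_smul _ (starEq_hgen m)
    have hslice' : sliceP h' = u := by
      rw [hh', map_sum]
      have hterm : ∀ m ∈ Finset.range (u.natDegree + 1),
          sliceP ((u.coeff m / ((m : k) + 2)) • hgen (m + 2) : MvPolynomial (Fin 2) k)
            = Polynomial.monomial m (u.coeff m) := by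
        intro m _
        have hne : ((m : k) + 2) ≠ 0 := by
          have h9 : (((m + 2 : ℕ)) : k) ≠ 0 := Nat.cast_ne_zero.mpr (by omega)
          push_cast at h9
          exact h9
        rw [map_smul, slice_hgen, Polynomial.smul_eq_C_mul, ← mul_assoc, ← Polynomial.C_mul,
          ← Polynomial.C_mul_X_pow_eq_monomial]
        congr 2
        push_cast
        rw [div_mul_cancel₀ _ hne]
      rw [Finset.sum_congr rfl hterm]
      exact (Polynomial.as_sum_range' u (u.natDegree + 1) (by omega)).symm
    have heq : h = h' := by
      have hsub : StarEq (h - h') := starEq_sub hstar hstar'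
      have hz : aeval ![(X 0 : MvPolynomial (Fin 2) k), 0] (h - h') = 0 := by
        rw [slice_emb, map_sub, hslice', ← hu, sub_self, map_zero]
      have h9 := starEq_inj (h - h') hsub hz
      exact sub_eq_zero.mp h9
    rw [heq]
    have hsum : X 0 * X 1 * h' = ∑ m ∈ Finset.range (u.natDegree + 1),
        (u.coeff m / ((m : k) + 2)) • (X 0 * qgen (m + 2)) := by
      rw [hh', Finset.mul_sum]
      refine Finset.sum_congr rfl fun m _ => ?_
      rw [mul_smul_comm]
      congr 1
      rw [mul_assoc, ← hgen_spec (show 2 ≤ m + 2 by omega)]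
    rw [hsum, SetLike.mem_coe]
    exact Submodule.sum_mem _ fun m _ => Submodule.smul_mem _ _
      (Submodule.subset_span ⟨m + 2, by omega, qgen (m + 2), qgen_rel (by omega), rfl⟩)
  · -- span ⊆ kernel
    intro f hf
    have hsub : {p : MvPolynomial (Fin 2) k | ∃ n : ℕ, 2 ≤ n ∧
        ∃ q : MvPolynomial (Fin 2) k,
          (X 0 - X 1) * q = X 0 ^ n - X 1 ^ n - (X 0 - X 1) ^ n ∧ p = X 0 * q}
        ⊆ ↑(Kker (k := k)) := by
      rintro p ⟨n, hn, q, hq, rfl⟩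
      have hsl : aeval ![(X 0 : MvPolynomial (Fin 2) k), 0] q = 0 := by
        have h2 := congrArg (aeval ![(X 0 : MvPolynomial (Fin 2) k), 0]) hq
        simp only [map_mul, map_sub, map_pow, aeval_X, Matrix.cons_val_zero,
          Matrix.cons_val_one, Matrix.head_cons, sub_zero,
          zero_pow (show n ≠ 0 by omega)] at h2
        have h3 : (X 0 : MvPolynomial (Fin 2) k)
            * aeval ![(X 0 : MvPolynomial (Fin 2) k), 0] q = 0 := by linear_combination h2
        exact (mul_eq_zero.mp h3).resolve_left (X_ne_zero _)
      obtain ⟨w, hw⟩ : (X 1 : MvPolynomial (Fin 2) k) ∣ q := X1_dvd_of_slice_zero q hsl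
      exact ⟨w, by rw [hw]; ring, gen_kerEq q w hq hw⟩
    exact Submodule.span_le.mpr hsub hf
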